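/- Kernel of left multiplication by a zero divisor: let A be a composition algebra over a field K of characteristic ≠ 2, with quadratic form Q, bilinear form B(x,y) = (Q(x+y) − Q x − Q y)/2 and conjugation x̄ := (2·B(x,1)) • 1 − x. Let x ∈ A be nonzero with Q(x) = 0. Then: (i) {y ∈ A | x*y = 0} = {x̄*z | z ∈ A}; in particular whenever x*y = 0 there exists z ∈ A with y = x̄*z; (ii) Q(x̄*z) = 0 for all z ∈ A, so {y | x*y = 0} is an isotropic subspace; (iii) the K-subspace {y ∈ A | x*y = 0} has dimension equal to (Module.finrank K A)/2, hence it is maximal isotropic. -/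

import Mathlib

noncomputable section

/-- The conjugation of a composition algebra with quadratic form `Q` and associated
bilinear form `B x y = (Q (x + y) - Q x - Q y) / 2`:  `x̄ = (2 • B x 1) • 1 - x`. -/
def conjCA {K : Type*} [Field K] {A : Type*} [NonAssocRing A] [Module K A]
    (Q : QuadraticForm K A) (x : A) : A :=
  (2 * ((Q (x + 1) - Q x - Q 1) / 2)) • (1 : A) - x

/-- Kernel of left multiplication by a zero divisor `x` in a composition algebra:
it equals `x̄ * A`, it is isotropic, and it has dimension `(dim A) / 2`
(hence is maximal isotropic). -/
theorem ker_leftMul_zero_divisor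
    (K : Type*) [Field K] (h2 : (2 : K) ≠ 0)
    (A : Type*) [NonAssocRing A] [Module K A] [IsScalarTower K A A] [SMulCommClass K A A]
    [Nontrivial A] [FiniteDimensional K A]
    (Q : QuadraticForm K A)
    (hmul : ∀ x y : A, Q (x * y) = Q x * Q y)
    (hnd : ∀ x : A, (∀ y : A, (Q (x + y) - Q x - Q y) / 2 = 0) → x = 0)
    (x : A) (hx : x ≠ 0) (hQx : Q x = 0) :
    (∀ y : A, x * y = 0 ↔ ∃ z : A, y = conjCA Q x * z) ∧
    (∀ z : A, Q (conjCA Q x * z) = 0) ∧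
    Set.finrank K {y : A | x * y = 0} = Module.finrank K A / 2 := by
  classical
  set P : LinearMap.BilinForm K A := Q.polarBilin with hPdef
  have Papp : ∀ a b : A, P a b = Q (a + b) - Q a - Q b := by
    intro a b
    simp [hPdef, QuadraticMap.polarBilin_apply_apply, QuadraticMap.polar]
  have hsymm : ∀ a b : A, P a b = P b a := by
    intro a b; simp [Papp, add_comm]; ring
  have hrefl : P.IsRefl := fun a b h => by rw [hsymm]; exact h
  have hPnd : P.SeparatingLeft := by
    intro a ha
    refine hnd a fun y => ?_
    have := ha y
    rw [Papp] at this
    rw [this, zero_div]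
  -- composition identities
  have hmulP : ∀ u y z : A, P (u * y) (z * y) = P u z * Q y := by
    intro u y z
    simp only [Papp, ← add_mul, hmul]
    ring
  have hmulP2 : ∀ u y w : A, P (u * y) (u * w) = Q u * P y w := by
    intro u y w
    simp only [Papp, ← mul_add, hmul]
    ring
  have hlink : ∀ u y z w : A, P (u * y) (z * w) + P (u * w) (z * y) = P u z * P y w := by
    intro u y z w
    have h1 := hmulP u (y + w) z
    simp only [mul_add, map_add, LinearMap.add_apply] at h1
    have h2 := hmulP u y z
    have h3 := hmulP u w z
    have h4 : Q (y + w) = P y w + Q y + Q w := by rw [Papp]; ring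
    rw [h4] at h1
    linear_combination h1 - h2 - h3
  -- Q 1 = 1
  have hQ1 : Q 1 = 1 := by
    have h1 : Q 1 * Q 1 = Q 1 := by rw [← hmul, one_mul]
    rcases eq_or_ne (Q 1) 0 with h0 | h0
    · exfalso
      have hQ0 : ∀ y : A, Q y = 0 := fun y => by
        rw [← one_mul y, hmul, h0, zero_mul]
      obtain ⟨a, ha⟩ := exists_ne (0 : A)
      exact ha (hPnd a fun b => by simp [Papp, hQ0])
    · exact mul_left_cancel₀ h0 (by rw [h1, mul_one])
  -- conjugation formula
  have hconj : ∀ u : A, conjCA Q u = P u 1 • (1 : A) - u := by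
    intro u
    rw [conjCA, Papp]
    congr 2
    field_simp
  have P11 : P 1 1 = 2 := by
    have : ((2 : K) • (1 : A)) = 1 + 1 := two_smul K (1 : A)
    have h4 : Q (1 + 1 : A) = 4 := by
      rw [← this, QuadraticMap.map_smul, hQ1]
      norm_num
    rw [Papp, h4, hQ1]; norm_num
  have hQadd : ∀ a b : A, Q (a + b) = Q a + Q b + P a b := by
    intro a b; rw [Papp]; ring
  have hQconj : ∀ u : A, Q (conjCA Q u) = Q u := by
    intro u
    rw [hconj, sub_eq_add_neg, hQadd, QuadraticMap.map_smul, QuadraticMap.map_neg, hQ1]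
    have h5 : P (P u 1 • (1 : A)) (-u) = -(P u 1 * P 1 u) := by
      simp [map_smul, map_neg, smul_eq_mul]
    rw [h5, hsymm 1 u]
    simp only [smul_eq_mul]
    ring
  -- adjoint identity
  have hadj : ∀ u a b : A, P (u * a) b = P u 1 * P a b - P (u * b) a := by
    intro u a b
    have := hlink u a 1 b
    rw [one_mul, one_mul] at this
    linear_combination this
  have hconjmul : ∀ u a b : A, P (conjCA Q u * a) b = P (u * b) a := by
    intro u a b
    rw [hconj]
    have h1 : (P u 1 • (1 : A) - u) * a = P u 1 • a - u * a := by
      rw [sub_mul, smul_mul_assoc, one_mul]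
    rw [h1]
    have h2 : P (P u 1 • a - u * a) b = P u 1 * P a b - P (u * a) b := by
      simp [map_sub, map_smul, smul_eq_mul, LinearMap.sub_apply, LinearMap.smul_apply]
    rw [h2, hadj u a b]
    ring
  have hconjconj : ∀ u : A, conjCA Q (conjCA Q u) = u := by
    intro u
    have ht : P (conjCA Q u) 1 = P u 1 := by
      rw [hconj]
      simp only [map_sub, map_smul, LinearMap.sub_apply, LinearMap.smul_apply, smul_eq_mul, P11]
      ring
    rw [hconj, ht, hconj]
    abel
  -- main identity : u * (conj u * z) = Q u • z
  have hmain : ∀ u z : A, u * (conjCA Q u * z) = Q u • z := by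
    intro u z
    have key : ∀ w : A, P (u * (conjCA Q u * z) - Q u • z) w = 0 := by
      intro w
      have h1 : P (u * (conjCA Q u * z)) w = Q u * P w z := by
        have h1a := hconjmul (conjCA Q u) (conjCA Q u * z) w
        rw [hconjconj] at h1a
        rw [h1a, hmulP2, hQconj]
      have h2 : P (Q u • z) w = Q u * P w z := by
        rw [map_smul, LinearMap.smul_apply, smul_eq_mul, hsymm]
      rw [map_sub, LinearMap.sub_apply, h1, h2, sub_self]
    have := hPnd _ key
    exact sub_eq_zero.mp this
  -- part (ii)
  have part2 : ∀ z : A, Q (conjCA Q x * z) = 0 := by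
    intro z
    rw [hmul, hQconj, hQx, zero_mul]
  -- linear maps
  set L : A →ₗ[K] A := LinearMap.mulLeft K x with hL
  set L' : A →ₗ[K] A := LinearMap.mulLeft K (conjCA Q x) with hL'
  have hrange_le : LinearMap.range L' ≤ LinearMap.ker L := by
    rintro y ⟨z, rfl⟩
    simp only [LinearMap.mem_ker, hL, hL', LinearMap.mulLeft_apply]
    rw [hmain, hQx, zero_smul]
  have hker_orth : LinearMap.ker L = P.orthogonal (LinearMap.range L') := by
    ext m
    rw [LinearMap.BilinForm.mem_orthogonal_iff]
    constructor
    · rintro hm n ⟨z, rfl⟩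
      simp only [hL', LinearMap.mulLeft_apply]
      rw [hconjmul]
      simp only [LinearMap.mem_ker, hL, LinearMap.mulLeft_apply] at hm
      rw [hm]
      simp
    · intro hm
      simp only [LinearMap.mem_ker, hL, LinearMap.mulLeft_apply]
      refine hPnd _ fun z => ?_
      have := hm (conjCA Q x * z) ⟨z, rfl⟩
      rw [hconjmul] at this
      exact this
  -- isotropy of the kernel
  have hQker : ∀ y ∈ LinearMap.ker L, Q y = 0 := by
    intro y hy
    simp only [LinearMap.mem_ker, hL, LinearMap.mulLeft_apply] at hy
    by_contra hQy
    refine hx (hPnd _ fun z => ?_)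
    have := hmulP x y z
    rw [hy] at this
    simp only [map_zero, LinearMap.zero_apply] at this
    exact (mul_eq_zero.mp this.symm).resolve_right hQy
  have hiso : LinearMap.ker L ≤ P.orthogonal (LinearMap.ker L) := by
    intro y hy
    rw [LinearMap.BilinForm.mem_orthogonal_iff]
    intro n hn
    rw [Papp, hQker y hy, hQker n hn,
      hQker (n + y) (add_mem hn hy)]
    ring
  -- dimension count
  set n := Module.finrank K A with hn
  set k := Module.finrank K (LinearMap.ker L) with hk
  set r := Module.finrank K (LinearMap.range L') with hr
  have e1 : k = n - r := by
    rw [hk, hker_orth, LinearMap.BilinForm.finrank_orthogonal (hrefl.nondegenerate_iff_separatingLeft.mpr hPnd)]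
  have e2 : k ≤ n - k := by
    calc k ≤ Module.finrank K (P.orthogonal (LinearMap.ker L)) :=
          Submodule.finrank_mono hiso
      _ = n - k := LinearMap.BilinForm.finrank_orthogonal (hrefl.nondegenerate_iff_separatingLeft.mpr hPnd) _
  have e3 : r ≤ k := Submodule.finrank_mono hrange_le
  have e4 : r ≤ n := by rw [hr]; exact Submodule.finrank_le _
  have e5 : k ≤ n := by rw [hk]; exact Submodule.finrank_le _
  have hkr : k = r := by omega
  have hk2 : k = n / 2 := by omega
  have heq : LinearMap.range L' = LinearMap.ker L :=
    Submodule.eq_of_le_of_finrank_le hrange_le (by omega)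
  refine ⟨?_, part2, ?_⟩
  · intro y
    constructor
    · intro hy
      have : y ∈ LinearMap.range L' := heq.ge (by simpa [hL, LinearMap.mem_ker] using hy)
      obtain ⟨z, hz⟩ := this
      exact ⟨z, hz.symm⟩
    · rintro ⟨z, rfl⟩
      rw [hmain, hQx, zero_smul]
  · have hset : {y : A | x * y = 0} = (LinearMap.ker L : Set A) := by
      ext y
      simp [hL, LinearMap.mem_ker]
    rw [Set.finrank, hset, Submodule.span_eq, ← hk, hk2]
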